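/- Let Γ be a connected two-ended highly-arc-transitive digraph of prime out-valency with fibre size m > 2. Then Γ is skew-symmetric: Γ is isomorphic to its reverse digraph. -/

import Mathlib

variable {V : Type*}

/-- The automorphism group of a digraph given by its arc relation `E`. -/
def autGroup (E : V → V → Prop) : Subgroup (Equiv.Perm V) where
  carrier := {g | ∀ u v : V, E u v ↔ E (g u) (g v)}
  one_mem' := by intro u v; simp
  mul_mem' := by
    intro a b ha hb u v
    simpa [Equiv.Perm.mul_apply] using (hb u v).trans (ha (b u) (b v))
  inv_mem' := by
    intro a ha u v
    simpa using (ha (a⁻¹ u) (a⁻¹ v)).symm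

/-- Connectedness of a digraph (in the underlying undirected sense). -/
def DConnected (E : V → V → Prop) : Prop :=
  ∀ u v : V, Relation.ReflTransGen (fun a b => E a b ∨ E b a) u v

/-- `f : Fin (k+1) → V` is a `k`-arc. -/
def IsKArc (E : V → V → Prop) (k : ℕ) (f : Fin (k + 1) → V) : Prop :=
  ∀ i : Fin k, E (f i.castSucc) (f i.succ)

def KArcTransitive (E : V → V → Prop) (k : ℕ) : Prop :=
  ∀ f g : Fin (k + 1) → V, IsKArc E k f → IsKArc E k g →
    ∃ a ∈ autGroup E, ∀ i, (a : Equiv.Perm V) (f i) = g i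

def HighlyArcTransitive (E : V → V → Prop) : Prop :=
  ∀ k : ℕ, KArcTransitive E k

def VertexTransitive (E : V → V → Prop) : Prop :=
  ∀ u v : V, ∃ a ∈ autGroup E, (a : Equiv.Perm V) u = v

def ArcTransitive (E : V → V → Prop) : Prop :=
  ∀ u v x y : V, E u v → E x y →
    ∃ a ∈ autGroup E, (a : Equiv.Perm V) u = x ∧ (a : Equiv.Perm V) v = y

/-- Reachability in the underlying undirected graph avoiding the vertex set `S`. -/
def ReachAvoid (E : V → V → Prop) (S : Set V) : V → V → Prop :=
  Relation.ReflTransGen (fun a b => (E a b ∨ E b a) ∧ a ∉ S ∧ b ∉ S)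

/-- `u` lies in an infinite component of the complement of `S`. -/
def InfComp (E : V → V → Prop) (S : Set V) (u : V) : Prop :=
  u ∉ S ∧ {w | ReachAvoid E S u w}.Infinite

/-- A connected digraph with exactly two ends. -/
def TwoEnded (E : V → V → Prop) : Prop :=
  DConnected E ∧
  (∀ S : Set V, S.Finite → ∀ u v w : V, InfComp E S u → InfComp E S v → InfComp E S w →
    ReachAvoid E S u v ∨ ReachAvoid E S u w ∨ ReachAvoid E S v w) ∧
  ∃ S : Set V, S.Finite ∧ ∃ u v : V, InfComp E S u ∧ InfComp E S v ∧ ¬ ReachAvoid E S u v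

/-- The stabilizer of a vertex `v` in the automorphism group. -/
def vStab (E : V → V → Prop) (v : V) : Subgroup (autGroup E) where
  carrier := {g | (g : Equiv.Perm V) v = v}
  one_mem' := rfl
  mul_mem' := by
    intro a b ha hb
    simp only [Set.mem_setOf_eq] at *
    simp [Subgroup.coe_mul, Equiv.Perm.mul_apply, ha, hb]
  inv_mem' := by
    intro a ha
    simp only [Set.mem_setOf_eq] at *
    have := congrArg (((a : Equiv.Perm V))⁻¹ : Equiv.Perm V) ha
    simpa using this.symm

def outSet (E : V → V → Prop) (v : V) : Set V := {u | E v u}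
def inSet (E : V → V → Prop) (v : V) : Set V := {u | E u v}

/-- The stabilizer of `v` acts quasi-primitively on the set `Ω`. -/
def QuasiPrimitivelyOn (E : V → V → Prop) (v : V) (Ω : Set V) : Prop :=
  (∀ u ∈ Ω, ∀ w ∈ Ω, ∃ g ∈ vStab E v, ((g : autGroup E) : Equiv.Perm V) u = w) ∧
  (∀ N : Subgroup (vStab E v), N.Normal →
    (∀ n ∈ N, ∀ u ∈ Ω, (((n : vStab E v) : autGroup E) : Equiv.Perm V) u = u) ∨
    (∀ u ∈ Ω, ∀ w ∈ Ω, ∃ n ∈ N, (((n : vStab E v) : autGroup E) : Equiv.Perm V) u = w))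

namespace TEP

open Set

variable {V : Type*}

lemma mem_aut_iff {E : V → V → Prop} {a : Equiv.Perm V} :
    a ∈ autGroup E ↔ ∀ u v : V, E u v ↔ E (a u) (a v) := Iff.rfl

lemma aut_out {E : V → V → Prop} {a : Equiv.Perm V} (ha : a ∈ autGroup E) (x : V) :
    outSet E (a x) = a '' outSet E x := by
  ext y
  constructor
  · intro hy
    refine ⟨a.symm y, ?_, a.apply_symm_apply y⟩
    have : E (a x) (a (a.symm y)) := by rw [a.apply_symm_apply]; exact hy
    exact (mem_aut_iff.1 ha x (a.symm y)).2 this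
  · rintro ⟨z, hz, rfl⟩
    exact (mem_aut_iff.1 ha x z).1 hz

lemma aut_in {E : V → V → Prop} {a : Equiv.Perm V} (ha : a ∈ autGroup E) (x : V) :
    inSet E (a x) = a '' inSet E x := by
  ext y
  constructor
  · intro hy
    refine ⟨a.symm y, ?_, a.apply_symm_apply y⟩
    have : E (a (a.symm y)) (a x) := by rw [a.apply_symm_apply]; exact hy
    exact (mem_aut_iff.1 ha (a.symm y) x).2 this
  · rintro ⟨z, hz, rfl⟩
    exact (mem_aut_iff.1 ha z x).1 hz

/-- All the standing hypotheses, bundled. -/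
structure Nice (E : V → V → Prop) (φ : V → ℤ) (p m : ℕ) : Prop where
  conn : DConnected E
  hat : HighlyArcTransitive E
  hout : ∀ v, (outSet E v).ncard = p
  hom : ∀ u v, E u v → φ v = φ u + 1
  fib : ∀ i : ℤ, (φ ⁻¹' {i}).ncard = m
  pp : p.Prime
  m1 : 1 ≤ m

variable {E : V → V → Prop} {φ : V → ℤ} {p m : ℕ}

lemma Nice.fib_finite (N : Nice E φ p m) (i : ℤ) : (φ ⁻¹' {i}).Finite := by
  by_contra h
  have h2 : (φ ⁻¹' {i}).Infinite := h
  have := h2.ncard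
  have := N.fib i
  have := N.m1
  omega
lemma Nice.fib_nonempty (N : Nice E φ p m) (i : ℤ) : (φ ⁻¹' {i}).Nonempty := by
  apply Set.nonempty_of_ncard_ne_zero
  have := N.fib i
  have := N.m1
  omega

lemma Nice.out_subset (N : Nice E φ p m) (u : V) : outSet E u ⊆ φ ⁻¹' {φ u + 1} := by
  intro v hv
  simp only [Set.mem_preimage, Set.mem_singleton_iff]
  exact N.hom u v hv

lemma Nice.in_subset (N : Nice E φ p m) (v : V) : inSet E v ⊆ φ ⁻¹' {φ v - 1} := by
  intro u hu
  simp only [Set.mem_preimage, Set.mem_singleton_iff]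
  have := N.hom u v hu
  omega

lemma Nice.out_finite (N : Nice E φ p m) (u : V) : (outSet E u).Finite :=
  (N.fib_finite (φ u + 1)).subset (N.out_subset u)

lemma Nice.in_finite (N : Nice E φ p m) (v : V) : (inSet E v).Finite :=
  (N.fib_finite (φ v - 1)).subset (N.in_subset v)

lemma Nice.ppos (N : Nice E φ p m) : 2 ≤ p := N.pp.two_le

lemma Nice.out_nonempty (N : Nice E φ p m) (u : V) : (outSet E u).Nonempty := by
  apply Set.nonempty_of_ncard_ne_zero
  have := N.hout u
  have := N.ppos
  omega

lemma Nice.p_le_m (N : Nice E φ p m) : p ≤ m := by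
  obtain ⟨u, -⟩ := N.fib_nonempty 0
  have h := Set.ncard_le_ncard (N.out_subset u) (N.fib_finite (φ u + 1))
  rw [N.hout u, N.fib (φ u + 1)] at h
  exact h

end TEP
namespace TEP

variable {V : Type*} {E : V → V → Prop} {φ : V → ℤ} {p m : ℕ}

lemma Nice.vtrans (N : Nice E φ p m) (u v : V) :
    ∃ a : Equiv.Perm V, a ∈ autGroup E ∧ a u = v := by
  obtain ⟨a, ha, h⟩ := N.hat 0 (fun _ => u) (fun _ => v) (fun i => i.elim0) (fun i => i.elim0)
  exact ⟨a, ha, h 0⟩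

lemma Nice.atrans (N : Nice E φ p m) {u v x y : V} (huv : E u v) (hxy : E x y) :
    ∃ a : Equiv.Perm V, a ∈ autGroup E ∧ a u = x ∧ a v = y := by
  have h1 : IsKArc E 1 ![u, v] := by
    intro i
    fin_cases i
    simpa using huv
  have h2 : IsKArc E 1 ![x, y] := by
    intro i
    fin_cases i
    simpa using hxy
  obtain ⟨a, ha, h⟩ := N.hat 1 ![u, v] ![x, y] h1 h2
  refine ⟨a, ha, ?_, ?_⟩
  · have := h 0; simpa using this
  · have := h 1; simpa using this

lemma Nice.aut_shift (N : Nice E φ p m) {a : Equiv.Perm V} (ha : a ∈ autGroup E) (x₀ : V) :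
    ∀ x : V, φ (a x) - φ x = φ (a x₀) - φ x₀ := by
  intro x
  have h := N.conn x₀ x
  induction h with
  | refl => rfl
  | @tail b c hab hprev ih =>
    rcases hprev with hbc | hcb
    · have h1 := N.hom b c hbc
      have h2 := N.hom (a b) (a c) ((mem_aut_iff.1 ha b c).1 hbc)
      omega
    · have h1 := N.hom c b hcb
      have h2 := N.hom (a c) (a b) ((mem_aut_iff.1 ha c b).1 hcb)
      omega

lemma Nice.aut_shift_zero (N : Nice E φ p m) {a : Equiv.Perm V} (ha : a ∈ autGroup E)
    {x₀ : V} (h0 : a x₀ = x₀) : ∀ x : V, φ (a x) = φ x := by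
  intro x
  have := N.aut_shift ha x₀ x
  rw [h0] at this
  omega

lemma Nice.indeg_const (N : Nice E φ p m) (u v : V) :
    (inSet E u).ncard = (inSet E v).ncard := by
  obtain ⟨a, ha, hav⟩ := N.vtrans u v
  have h1 : inSet E v = a '' inSet E u := by rw [← hav, aut_in ha]
  rw [h1, Set.ncard_image_of_injective _ a.injective]

end TEP
namespace TEP

open Set

variable {V : Type*} {E : V → V → Prop} {φ : V → ℤ} {p m : ℕ}

lemma Nice.indeg_eq (N : Nice E φ p m) (v : V) : (inSet E v).ncard = p := by
  classical
  set i : ℤ := φ v - 1 with hi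
  set s : Finset V := (N.fib_finite i).toFinset with hs
  set t : Finset V := (N.fib_finite (i + 1)).toFinset with ht
  have hsmem : ∀ x, x ∈ s ↔ φ x = i := by
    intro x; simp [hs, Set.Finite.mem_toFinset]
  have htmem : ∀ x, x ∈ t ↔ φ x = i + 1 := by
    intro x; simp [ht, Set.Finite.mem_toFinset]
  have hscard : s.card = m := by
    rw [hs, ← Set.ncard_eq_toFinset_card _ (N.fib_finite i)]; exact N.fib i
  have htcard : t.card = m := by
    rw [ht, ← Set.ncard_eq_toFinset_card _ (N.fib_finite (i+1))]; exact N.fib (i + 1)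
  set A : Finset (V × V) := (s ×ˢ t).filter (fun q => E q.1 q.2) with hA
  have hAmem : ∀ q : V × V, q ∈ A ↔ (φ q.1 = i ∧ E q.1 q.2) := by
    intro q
    simp only [hA, Finset.mem_filter, Finset.mem_product, hsmem, htmem]
    constructor
    · rintro ⟨⟨h1, h2⟩, h3⟩; exact ⟨h1, h3⟩
    · rintro ⟨h1, h3⟩
      exact ⟨⟨h1, by rw [N.hom _ _ h3, h1]⟩, h3⟩
  -- count by first coordinate
  have hcount1 : A.card = m * p := by
    rw [Finset.card_eq_sum_card_fiberwise (f := Prod.fst) (t := s)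
      (fun q hq => by rw [Finset.mem_coe, hsmem]; exact ((hAmem q).1 hq).1)]
    have hterm : ∀ u ∈ s, (A.filter (fun q => q.1 = u)).card = p := by
      intro u hu
      have himg : (A.filter (fun q => q.1 = u)) = (N.out_finite u).toFinset.image (fun y => (u, y)) := by
        ext q
        simp only [Finset.mem_filter, Finset.mem_image, Set.Finite.mem_toFinset, hAmem]
        constructor
        · rintro ⟨⟨h1, h2⟩, h3⟩
          exact ⟨q.2, by rwa [h3] at h2, by rw [← h3]⟩
        · rintro ⟨y, hy, rfl⟩
          exact ⟨⟨(hsmem u).1 hu, hy⟩, rfl⟩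
      rw [himg, Finset.card_image_of_injective _ (fun a b h => by injection h),
        ← Set.ncard_eq_toFinset_card _ (N.out_finite u)]
      exact N.hout u
    rw [Finset.sum_congr rfl hterm, Finset.sum_const, hscard, smul_eq_mul]
  -- count by second coordinate
  have hcount2 : A.card = m * (inSet E v).ncard := by
    rw [Finset.card_eq_sum_card_fiberwise (f := Prod.snd) (t := t)
      (fun q hq => by rw [Finset.mem_coe, htmem, N.hom _ _ ((hAmem q).1 hq).2, ((hAmem q).1 hq).1])]
    have hterm : ∀ w ∈ t, (A.filter (fun q => q.2 = w)).card = (inSet E v).ncard := by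
      intro w hw
      have himg : (A.filter (fun q => q.2 = w)) = (N.in_finite w).toFinset.image (fun x => (x, w)) := by
        ext q
        simp only [Finset.mem_filter, Finset.mem_image, Set.Finite.mem_toFinset, hAmem]
        constructor
        · rintro ⟨⟨h1, h2⟩, h3⟩
          exact ⟨q.1, by rwa [h3] at h2, by rw [← h3]⟩
        · rintro ⟨x, hx, rfl⟩
          refine ⟨⟨?_, hx⟩, rfl⟩
          show φ x = i
          have := N.hom x w hx
          have := (htmem w).1 hw
          omega
      rw [himg, Finset.card_image_of_injective _ (fun a b h => by injection h),
        ← Set.ncard_eq_toFinset_card _ (N.in_finite w)]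
      exact N.indeg_const w v
    rw [Finset.sum_congr rfl hterm, Finset.sum_const, htcard, smul_eq_mul]
  have := hcount1.symm.trans hcount2
  have hm := N.m1
  exact (Nat.eq_of_mul_eq_mul_left (by omega) this).symm

end TEP
namespace TEP

open Set

variable {V : Type*} {E : V → V → Prop} {φ : V → ℤ} {p m : ℕ}

lemma Nice.in_nonempty (N : Nice E φ p m) (v : V) : (inSet E v).Nonempty := by
  apply Set.nonempty_of_ncard_ne_zero
  have := N.indeg_eq v
  have := N.ppos
  omega

/-- The key dichotomy: an invariant equivalence (kernel of a function `F`) on a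
transitively-acted set of prime size is trivial or universal. -/
lemma dichotomy {β : Type*} (hp : p.Prime) {S : Set V} (hfin : S.Finite) (hcard : S.ncard = p)
    (F : V → β)
    (htr : ∀ a ∈ S, ∀ b ∈ S, ∃ σ : V → V, Set.BijOn σ S S ∧ σ a = b ∧
      (∀ x ∈ S, ∀ y ∈ S, (F x = F y ↔ F (σ x) = F (σ y)))) :
    (∀ a ∈ S, ∀ b ∈ S, F a = F b) ∨ (∀ a ∈ S, ∀ b ∈ S, F a = F b → a = b) := by
  classical
  set s : Finset V := hfin.toFinset with hsdef
  have hsmem : ∀ x, x ∈ s ↔ x ∈ S := fun x => hfin.mem_toFinset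
  have hscard : s.card = p := by
    rw [hsdef, ← Set.ncard_eq_toFinset_card _ hfin]; exact hcard
  have hne : s.Nonempty := by
    rw [← Finset.card_pos, hscard]; exact hp.pos
  obtain ⟨a₀, ha₀⟩ := hne
  set C : V → Finset V := fun a => s.filter (fun b => F b = F a) with hC
  have hCmem : ∀ a x, x ∈ C a ↔ x ∈ S ∧ F x = F a := by
    intro a x; simp [hC, hsmem]
  -- all classes have the same size
  have hsize : ∀ a ∈ S, (C a).card = (C a₀).card := by
    intro a ha
    obtain ⟨σ, hbij, hσa, hinv⟩ := htr a₀ ((hsmem a₀).1 ha₀) a ha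
    have himg : (C a₀).image σ = C a := by
      ext y
      simp only [Finset.mem_image]
      constructor
      · rintro ⟨x, hx, rfl⟩
        obtain ⟨hxS, hxF⟩ := (hCmem a₀ x).1 hx
        refine (hCmem a _).2 ⟨hbij.mapsTo hxS, ?_⟩
        rw [← hσa]
        exact (hinv x hxS a₀ ((hsmem a₀).1 ha₀)).1 hxF
      · intro hy
        obtain ⟨hyS, hyF⟩ := (hCmem a y).1 hy
        obtain ⟨x, hxS, rfl⟩ := hbij.surjOn hyS
        refine ⟨x, (hCmem a₀ x).2 ⟨hxS, ?_⟩, rfl⟩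
        exact (hinv x hxS a₀ ((hsmem a₀).1 ha₀)).2 (by rw [hσa]; exact hyF)
    rw [← himg, Finset.card_image_of_injOn (fun x hx y hy h =>
      hbij.injOn ((hCmem a₀ x).1 hx).1 ((hCmem a₀ y).1 hy).1 h)]
  set c : ℕ := (C a₀).card with hc
  -- c divides p
  have hfib : s.card = (s.image F).card * c := by
    rw [Finset.card_eq_sum_card_fiberwise (f := F) (t := s.image F)
      (fun x hx => Finset.mem_image_of_mem F hx)]
    have hterm : ∀ X ∈ s.image F, (s.filter (fun b => F b = X)).card = c := by
      intro X hX
      obtain ⟨a, ha, rfl⟩ := Finset.mem_image.1 hX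
      exact hsize a ((hsmem a).1 ha)
    rw [Finset.sum_congr rfl hterm, Finset.sum_const, smul_eq_mul]
  have hdvd : c ∣ p := ⟨(s.image F).card, by rw [← hscard, hfib, mul_comm]⟩
  rcases (Nat.Prime.eq_one_or_self_of_dvd hp c hdvd) with h1 | hP
  · right
    intro a ha b hb hF
    have hac : a ∈ C a := (hCmem a a).2 ⟨ha, rfl⟩
    have hbc : b ∈ C a := (hCmem a b).2 ⟨hb, hF.symm⟩
    have : (C a).card ≤ 1 := by rw [hsize a ha, h1]
    exact (Finset.card_le_one.1 this b hbc a hac).symm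
  · left
    intro a ha b hb
    have hsub : C a ⊆ s := Finset.filter_subset _ _
    have : C a = s := Finset.eq_of_subset_of_card_le hsub (by
      rw [hsize a ha, hP, hscard])
    have : b ∈ C a := by rw [this]; exact (hsmem b).2 hb
    exact ((hCmem a b).1 this).2.symm

end TEP
namespace TEP

open Set

variable {V : Type*} {E : V → V → Prop} {φ : V → ℤ} {p m : ℕ}

/-- Universality of in-set equality on out-neighbourhoods. -/
def Univ1 (E : V → V → Prop) : Prop :=
  ∀ u : V, ∀ v ∈ outSet E u, ∀ v' ∈ outSet E u, inSet E v = inSet E v'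

/-- Universality of out-set equality on in-neighbourhoods. -/
def UnivOp (E : V → V → Prop) : Prop :=
  ∀ v : V, ∀ u ∈ inSet E v, ∀ u' ∈ inSet E v, outSet E u = outSet E u'

/-- Universality of out-set equality on out-neighbourhoods. -/
def UnivOO (E : V → V → Prop) : Prop :=
  ∀ u : V, ∀ v ∈ outSet E u, ∀ v' ∈ outSet E u, outSet E v = outSet E v'

private lemma bijOn_of_image_eq {σ : Equiv.Perm V} {S : Set V} (h : σ '' S = S) :
    Set.BijOn σ S S := by
  refine ⟨fun x hx => ?_, σ.injective.injOn, fun y hy => ?_⟩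
  · rw [← h]; exact ⟨x, hx, rfl⟩
  · rw [← h] at hy; obtain ⟨x, hx, rfl⟩ := hy; exact ⟨x, hx, rfl⟩

lemma Nice.dich_at_out (N : Nice E φ p m) (u : V) (F : V → Set V)
    (hFaut : ∀ (a : Equiv.Perm V), a ∈ autGroup E → ∀ x, F (a x) = a '' F x) :
    (∀ v ∈ outSet E u, ∀ v' ∈ outSet E u, F v = F v') ∨
    (∀ v ∈ outSet E u, ∀ v' ∈ outSet E u, F v = F v' → v = v') := by
  apply dichotomy N.pp (N.out_finite u) (N.hout u) F
  intro a ha b hb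
  obtain ⟨g, hg, hgu, hgab⟩ := N.atrans (ha : E u a) (hb : E u b)
  refine ⟨⇑g, bijOn_of_image_eq ?_, hgab, ?_⟩
  · rw [← aut_out hg u, hgu]
  · intro x _ y _
    rw [hFaut g hg x, hFaut g hg y, Set.image_eq_image g.injective]

lemma Nice.dich_at_in (N : Nice E φ p m) (v : V) (F : V → Set V)
    (hFaut : ∀ (a : Equiv.Perm V), a ∈ autGroup E → ∀ x, F (a x) = a '' F x) :
    (∀ u ∈ inSet E v, ∀ u' ∈ inSet E v, F u = F u') ∨
    (∀ u ∈ inSet E v, ∀ u' ∈ inSet E v, F u = F u' → u = u') := by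
  apply dichotomy N.pp (N.in_finite v) (N.indeg_eq v) F
  intro a ha b hb
  obtain ⟨g, hg, hgab, hgv⟩ := N.atrans (ha : E a v) (hb : E b v)
  refine ⟨⇑g, bijOn_of_image_eq ?_, hgab, ?_⟩
  · rw [← aut_in hg v, hgv]
  · intro x _ y _
    rw [hFaut g hg x, hFaut g hg y, Set.image_eq_image g.injective]

lemma Nice.univ1_prop (N : Nice E φ p m) {u : V}
    (h : ∀ v ∈ outSet E u, ∀ v' ∈ outSet E u, inSet E v = inSet E v') : Univ1 E := by
  intro u' v hv v' hv'
  obtain ⟨g, hg, hgu⟩ := N.vtrans u u'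
  have hout' : outSet E u' = g '' outSet E u := by rw [← hgu, aut_out hg]
  rw [hout'] at hv hv'
  obtain ⟨x, hx, rfl⟩ := hv
  obtain ⟨x', hx', rfl⟩ := hv'
  rw [aut_in hg, aut_in hg, h x hx x' hx']

lemma Nice.univOp_prop (N : Nice E φ p m) {v : V}
    (h : ∀ u ∈ inSet E v, ∀ u' ∈ inSet E v, outSet E u = outSet E u') : UnivOp E := by
  intro v' u hu u' hu'
  obtain ⟨g, hg, hgv⟩ := N.vtrans v v'
  have hin' : inSet E v' = g '' inSet E v := by rw [← hgv, aut_in hg]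
  rw [hin'] at hu hu'
  obtain ⟨x, hx, rfl⟩ := hu
  obtain ⟨x', hx', rfl⟩ := hu'
  rw [aut_out hg, aut_out hg, h x hx x' hx']

lemma Nice.univOO_prop (N : Nice E φ p m) {u : V}
    (h : ∀ v ∈ outSet E u, ∀ v' ∈ outSet E u, outSet E v = outSet E v') : UnivOO E := by
  intro u' v hv v' hv'
  obtain ⟨g, hg, hgu⟩ := N.vtrans u u'
  have hout' : outSet E u' = g '' outSet E u := by rw [← hgu, aut_out hg]
  rw [hout'] at hv hv'
  obtain ⟨x, hx, rfl⟩ := hv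
  obtain ⟨x', hx', rfl⟩ := hv'
  rw [aut_out hg, aut_out hg, h x hx x' hx']

lemma univOp_univ1 (h : UnivOp E) : Univ1 E := by
  intro u v hv v' hv'
  ext w
  constructor
  · intro hw
    have h1 : outSet E w = outSet E u := h v w hw u hv
    have : v' ∈ outSet E w := by rw [h1]; exact hv'
    exact this
  · intro hw
    have h1 : outSet E w = outSet E u := h v' w hw u hv'
    have : v ∈ outSet E w := by rw [h1]; exact hv
    exact this

lemma univ1_univOp (h : Univ1 E) : UnivOp E := by
  intro v u hu u' hu'
  ext w
  constructor
  · intro hw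
    have h1 : inSet E w = inSet E v := h u w hw v hu
    have : u' ∈ inSet E w := by rw [h1]; exact hu'
    exact this
  · intro hw
    have h1 : inSet E w = inSet E v := h u' w hw v hu'
    have : u ∈ inSet E w := by rw [h1]; exact hu
    exact this

end TEP
namespace TEP

open Set

variable {V : Type*} {E : V → V → Prop} {φ : V → ℤ} {p m : ℕ}

lemma Nice.rigid (N : Nice E φ p m)
    (t1 : ∀ u : V, ∀ v ∈ outSet E u, ∀ v' ∈ outSet E u, inSet E v = inSet E v' → v = v')
    (t2 : ∀ v : V, ∀ u ∈ inSet E v, ∀ u' ∈ inSet E v, outSet E u = outSet E u' → u = u')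
    {a : Equiv.Perm V} (ha : a ∈ autGroup E) (hfix : ∀ x, φ x = 0 → a x = x) :
    ∀ x, a x = x := by
  obtain ⟨x₀, hx₀⟩ := N.fib_nonempty 0
  have hx₀' : φ x₀ = 0 := hx₀
  have hφ : ∀ x, φ (a x) = φ x := N.aut_shift_zero ha (hfix x₀ hx₀')
  suffices h : ∀ n : ℕ, ∀ x, (φ x).natAbs ≤ n → a x = x by
    intro x; exact h (φ x).natAbs x le_rfl
  intro n
  induction n with
  | zero =>
    intro x hx
    exact hfix x (by omega)
  | succ n ih =>
    intro x hx
    rcases lt_or_ge (φ x) 0 with hneg | hpos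
    · obtain ⟨v, hv⟩ := N.out_nonempty x
      have hφv : φ v = φ x + 1 := N.hom x v hv
      have hva : a v = v := ih v (by omega)
      have hax : a x ∈ inSet E v := by
        have h2 : E (a x) (a v) := (mem_aut_iff.1 ha x v).1 hv
        rwa [hva] at h2
      apply t2 v (a x) hax x hv
      rw [aut_out ha x]
      ext y
      constructor
      · rintro ⟨z, hz, rfl⟩
        have hz2 : a z = z := ih z (by have := N.hom x z hz; omega)
        rwa [hz2]
      · intro hy
        exact ⟨y, hy, ih y (by have := N.hom x y hy; omega)⟩
    · rcases eq_or_lt_of_le hpos with h0 | hpos1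
      · exact hfix x h0.symm
      · obtain ⟨u, hu⟩ := N.in_nonempty x
        have hφu : φ u = φ x - 1 := by have := N.hom u x hu; omega
        have hua : a u = u := ih u (by omega)
        have hax : a x ∈ outSet E u := by
          have h2 : E (a u) (a x) := (mem_aut_iff.1 ha u x).1 hu
          rwa [hua] at h2
        apply t1 u (a x) hax x hu
        rw [aut_in ha x]
        ext y
        constructor
        · rintro ⟨z, hz, rfl⟩
          have hz2 : a z = z := ih z (by have := N.hom z x hz; omega)
          rwa [hz2]
        · intro hy
          exact ⟨y, hy, ih y (by have := N.hom y x hy; omega)⟩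

lemma Nice.caseB_false (N : Nice E φ p m)
    (t1 : ∀ u : V, ∀ v ∈ outSet E u, ∀ v' ∈ outSet E u, inSet E v = inSet E v' → v = v')
    (t2 : ∀ v : V, ∀ u ∈ inSet E v, ∀ u' ∈ inSet E v, outSet E u = outSet E u' → u = u') :
    False := by
  classical
  -- an enumeration of each out-set
  have hoe : ∀ x : V, ∃ f : Fin p → V, Function.Injective f ∧ (∀ i, E x (f i)) ∧
      (∀ y, E x y → ∃ i, f i = y) := by
    intro x
    have hfin := N.out_finite x
    have hcard : hfin.toFinset.card = p := by
      rw [← Set.ncard_eq_toFinset_card _ hfin]; exact N.hout x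
    let e := hfin.toFinset.equivFinOfCardEq hcard
    refine ⟨fun i => (e.symm i : V), ?_, ?_, ?_⟩
    · intro i j hij
      have := Subtype.ext hij (p := fun z => z ∈ hfin.toFinset)
      exact e.symm.injective this
    · intro i
      have := (e.symm i).2
      rw [Set.Finite.mem_toFinset] at this
      exact this
    · intro y hy
      refine ⟨e ⟨y, ?_⟩, by simp⟩
      rw [Set.Finite.mem_toFinset]; exact hy
  choose oe oeinj oemem oesurj using hoe
  obtain ⟨u₀, hu₀⟩ := N.fib_nonempty 0
  have hu₀' : φ u₀ = 0 := hu₀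
  -- paths driven by words
  set pa : (ℕ → Fin p) → ℕ → V := fun w n => Nat.rec u₀ (fun j xj => oe xj (w j)) n with hpa
  have pa0 : ∀ w, pa w 0 = u₀ := fun w => rfl
  have paS : ∀ w n, pa w (n + 1) = oe (pa w n) (w n) := fun w n => rfl
  have karc : ∀ (w : ℕ → Fin p) (k : ℕ), IsKArc E k (fun i : Fin (k+1) => pa w i) := by
    intro w k i
    simp only [Fin.coe_castSucc, Fin.val_succ, paS]
    exact oemem (pa w i) (w i)
  set k : ℕ := m ^ m with hk
  set pad : (Fin k → Fin p) → ℕ → Fin p :=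
    fun w n => if h : n < k then w ⟨n, h⟩ else ⟨0, N.pp.pos⟩ with hpad
  set w₀ : Fin k → Fin p := fun _ => ⟨0, N.pp.pos⟩ with hw₀
  have hex : ∀ w : Fin k → Fin p, ∃ a : Equiv.Perm V, a ∈ autGroup E ∧
      ∀ i : Fin (k+1), a (pa (pad w₀) i) = pa (pad w) i := by
    intro w
    obtain ⟨a, ha, hai⟩ := N.hat k _ _ (karc (pad w₀) k) (karc (pad w) k)
    exact ⟨a, ha, hai⟩
  choose A hAaut hAi using hex
  have hAu₀ : ∀ w, A w u₀ = u₀ := by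
    intro w
    have := hAi w 0
    simpa [pa0] using this
  have hAφ : ∀ w x, φ (A w x) = φ x := fun w => N.aut_shift_zero (hAaut w) (hAu₀ w)
  -- injectivity into functions on the fibre of 0
  set S : Set V := φ ⁻¹' {0} with hS
  haveI : Fintype ↥S := (N.fib_finite 0).fintype
  set Φ : (Fin k → Fin p) → (↥S → ↥S) := fun w x => ⟨A w x.1, by
    have hx : φ (x : V) = 0 := x.2
    show A w ↑x ∈ S
    simp only [hS, Set.mem_preimage, Set.mem_singleton_iff, hAφ, hx]⟩ with hΦ
  have hΦinj : Function.Injective Φ := by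
    intro w w' h
    have hAfix : ∀ x, φ x = 0 → A w x = A w' x := by
      intro x hx
      have := congrFun h ⟨x, hx⟩
      exact congrArg Subtype.val this
    set b : Equiv.Perm V := (A w')⁻¹ * (A w) with hb
    have hbaut : b ∈ autGroup E := (autGroup E).mul_mem ((autGroup E).inv_mem (hAaut w')) (hAaut w)
    have hbfix : ∀ x, φ x = 0 → b x = x := by
      intro x hx
      show (A w')⁻¹ ((A w) x) = x
      rw [hAfix x hx]
      exact (A w').symm_apply_apply x
    have hball := N.rigid t1 t2 hbaut hbfix
    have hAall : ∀ x, A w x = A w' x := by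
      intro x
      have h1 : ((A w')⁻¹ * A w : Equiv.Perm V) x = x := hball x
      rw [Equiv.Perm.mul_apply] at h1
      have h2 := congrArg (A w') h1
      rwa [← Equiv.Perm.mul_apply, mul_inv_cancel, Equiv.Perm.one_apply] at h2
    have hpaeq : ∀ i : Fin (k+1), pa (pad w) i = pa (pad w') i := by
      intro i
      rw [← hAi w i, ← hAi w' i, hAall]
    have hpadeq : ∀ j, j < k → pad w j = pad w' j := by
      intro j hj
      have e1 := hpaeq ⟨j, by omega⟩
      have e2 := hpaeq ⟨j + 1, by omega⟩
      simp only [paS] at e2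
      rw [e1] at e2
      exact oeinj (pa (pad w') j) e2
    funext j
    have := hpadeq j j.2
    simpa [hpad, j.2] using this
  have hcard := Fintype.card_le_of_injective Φ hΦinj
  have hcW : Fintype.card (Fin k → Fin p) = p ^ k := by
    simp [Fintype.card_fun]
  have hcS : Fintype.card ↥S = m := by
    rw [← Set.toFinset_card, ← Set.ncard_eq_toFinset_card']
    exact N.fib 0
  have hcSS : Fintype.card (↥S → ↥S) = m ^ m := by
    rw [Fintype.card_fun, hcS]
  rw [hcW, hcSS] at hcard
  -- p ^ (m ^ m) ≤ m ^ m is absurd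
  have h2k : k < 2 ^ k := Nat.lt_two_pow_self
  have hle : 2 ^ k ≤ p ^ k := Nat.pow_le_pow_left N.ppos k
  omega

end TEP
namespace TEP

open Set

variable {V : Type*}

/-- Iterated descendant sets. -/
def Dset (E : V → V → Prop) : ℕ → V → Set V
  | 0, x => {x}
  | (n+1), x => {z | ∃ y ∈ Dset E n x, E y z}

variable {E : V → V → Prop} {φ : V → ℤ} {p m : ℕ}

lemma Dset_zero (x : V) : Dset E 0 x = {x} := rfl

lemma Dset_succ (n : ℕ) (x : V) : Dset E (n+1) x = {z | ∃ y ∈ Dset E n x, E y z} := rfl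

lemma Dset_one (x : V) : Dset E 1 x = outSet E x := by
  ext z
  simp [Dset_succ, Dset_zero, outSet]

lemma Dset_mono {u v : V} (huv : E u v) : ∀ n, Dset E n v ⊆ Dset E (n+1) u := by
  intro n
  induction n with
  | zero =>
    intro z hz
    rw [Dset_zero, Set.mem_singleton_iff] at hz
    subst hz
    rw [Dset_succ, Dset_zero]
    exact ⟨u, rfl, huv⟩
  | succ n ih =>
    intro z hz
    rw [Dset_succ] at hz
    obtain ⟨y, hy, hyz⟩ := hz
    exact ⟨y, ih hy, hyz⟩

lemma Dset_pump {a b : ℕ} {x y : V} (h : Dset E a x = Dset E b y) :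
    ∀ t, Dset E (a + t) x = Dset E (b + t) y := by
  intro t
  induction t with
  | zero => exact h
  | succ t ih => rw [show a + (t+1) = (a+t) + 1 by omega, show b + (t+1) = (b+t) + 1 by omega,
      Dset_succ, Dset_succ, ih]

lemma Dset_shift (hOO : UnivOO E) {x y : V} (hxy : E x y) :
    ∀ n, 1 ≤ n → Dset E (n+1) x = Dset E n y := by
  intro n hn
  induction n, hn using Nat.le_induction with
  | base =>
    ext z
    rw [Dset_succ]
    simp only [Dset_one, Set.mem_setOf_eq]
    constructor
    · rintro ⟨y', hy', hz⟩
      rw [← hOO x y' hy' y hxy]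
      exact hz
    · intro hz
      exact ⟨y, hxy, hz⟩
  | succ n hn ih =>
    have h1 : Dset E ((n+1)+1) x = {z | ∃ w ∈ Dset E (n+1) x, E w z} := Dset_succ _ _
    have h2 : Dset E (n+1) y = {z | ∃ w ∈ Dset E n y, E w z} := Dset_succ _ _
    rw [h1, ih, h2]

lemma Dset_out (hOO : UnivOO E) (N : Nice E φ p m) :
    ∀ n, 1 ≤ n → ∀ x : V, ∃ z, Dset E n x = outSet E z := by
  intro n hn
  induction n, hn using Nat.le_induction with
  | base => exact fun x => ⟨x, Dset_one x⟩
  | succ n hn ih =>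
    intro x
    obtain ⟨y, hy⟩ := N.out_nonempty x
    obtain ⟨z, hz⟩ := ih y
    exact ⟨z, by rw [Dset_shift hOO hy n hn, hz]⟩

lemma Dset_transport (hOO : UnivOO E) (N : Nice E φ p m) (x y : V) :
    ∃ a b : ℕ, 1 ≤ a ∧ 1 ≤ b ∧ φ x + a = φ y + b ∧ Dset E a x = Dset E b y := by
  have h := N.conn x y
  induction h with
  | refl => exact ⟨1, 1, le_rfl, le_rfl, rfl, rfl⟩
  | @tail b c hab hstep ih =>
    obtain ⟨α, β, hα, hβ, hφ, hD⟩ := ih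
    rcases hstep with hbc | hcb
    · refine ⟨α + 1, β, by omega, hβ, ?_, ?_⟩
      · have := N.hom b c hbc
        push_cast
        omega
      · have h1 : Dset E (α+1) x = Dset E (β+1) b := by
          have := Dset_pump hD 1
          simpa using this
        rw [h1, Dset_shift hOO hbc β hβ]
    · refine ⟨α, β + 1, hα, by omega, ?_, ?_⟩
      · have := N.hom c b hcb
        push_cast
        omega
      · rw [hD, Dset_shift hOO hcb β hβ]

lemma Dset_ancestor (N : Nice E φ p m) (x : V) :
    ∀ n : ℕ, ∃ v, φ v = φ x - n ∧ x ∈ Dset E n v := by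
  intro n
  induction n with
  | zero => exact ⟨x, by simp, by rw [Dset_zero]; rfl⟩
  | succ n ih =>
    obtain ⟨v, hv, hx⟩ := ih
    obtain ⟨u, hu⟩ := N.in_nonempty v
    refine ⟨u, ?_, Dset_mono hu n hx⟩
    have := N.hom u v hu
    push_cast
    omega

lemma Nice.m_le_p_of_univOO (N : Nice E φ p m) (hOO : UnivOO E) : m ≤ p := by
  classical
  set s : Finset V := (N.fib_finite 0).toFinset with hs
  have hsmem : ∀ x, x ∈ s ↔ φ x = 0 := by
    intro x; simp [hs, Set.Finite.mem_toFinset]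
  have hpair : ∀ q : V × V, ∃ a : ℕ, (φ q.1 = 0 ∧ φ q.2 = 0) →
      (1 ≤ a ∧ Dset E a q.1 = Dset E a q.2) := by
    intro q
    by_cases hq : φ q.1 = 0 ∧ φ q.2 = 0
    · obtain ⟨a, b, ha, hb, hφ, hD⟩ := Dset_transport hOO N q.1 q.2
      have hab : a = b := by omega
      subst hab
      exact ⟨a, fun _ => ⟨ha, hD⟩⟩
    · exact ⟨1, fun h => absurd h hq⟩
  choose f hf using hpair
  set A : ℕ := (s ×ˢ s).sup f + 1 with hA
  have hA1 : 1 ≤ A := by omega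
  have hall : ∀ v v', φ v = 0 → φ v' = 0 → Dset E A v = Dset E A v' := by
    intro v v' hv hv'
    have hqmem : (v, v') ∈ s ×ˢ s := by
      rw [Finset.mem_product]
      exact ⟨(hsmem v).2 hv, (hsmem v').2 hv'⟩
    have hfle : f (v, v') ≤ (s ×ˢ s).sup f := Finset.le_sup hqmem
    obtain ⟨h1, hD⟩ := hf (v, v') ⟨hv, hv'⟩
    have := Dset_pump hD (A - f (v, v'))
    rwa [show f (v, v') + (A - f (v, v')) = A by omega] at this
  obtain ⟨v₁, hv₁⟩ := N.fib_nonempty 0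
  have hv₁' : φ v₁ = 0 := hv₁
  have hsub : φ ⁻¹' {(A : ℤ)} ⊆ Dset E A v₁ := by
    intro x hx
    have hφx : φ x = (A : ℤ) := hx
    obtain ⟨v, hv, hxv⟩ := Dset_ancestor N x A
    have hv0 : φ v = 0 := by rw [hv, hφx]; ring
    rwa [hall v v₁ hv0 hv₁'] at hxv
  obtain ⟨z, hz⟩ := Dset_out hOO N A hA1 v₁
  rw [hz] at hsub
  have := Set.ncard_le_ncard hsub (N.out_finite z)
  rwa [N.fib (A : ℤ), N.hout z] at this

end TEP
namespace TEP

open Set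

variable {V : Type*} {E : V → V → Prop} {φ : V → ℤ} {p m : ℕ}

/-- Each level is completely joined to the next. -/
def IsComplete (E : V → V → Prop) (φ : V → ℤ) : Prop := ∀ u v : V, φ v = φ u + 1 → E u v

lemma Nice.complete_of_m_le_p (N : Nice E φ p m) (h : m ≤ p) : IsComplete E φ := by
  intro u v hv
  have hsub := N.out_subset u
  have heq : outSet E u = φ ⁻¹' {φ u + 1} := by
    apply Set.eq_of_subset_of_ncard_le hsub ?_ (N.fib_finite _)
    rw [N.fib, N.hout]
    exact h
  have hvmem : v ∈ φ ⁻¹' {φ u + 1} := hv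
  rw [← heq] at hvmem
  exact hvmem

lemma Nice.univ1_all (N : Nice E φ p m) : Univ1 E := by
  rcases Classical.em (∃ u : V,
      ¬ (∀ v ∈ outSet E u, ∀ v' ∈ outSet E u, inSet E v = inSet E v' → v = v')) with ⟨u, hu⟩ | hno
  · rcases N.dich_at_out u (inSet E) (fun a ha x => aut_in ha x) with h | h
    · exact N.univ1_prop h
    · exact absurd h hu
  · have t1 : ∀ u : V, ∀ v ∈ outSet E u, ∀ v' ∈ outSet E u, inSet E v = inSet E v' → v = v' := by
      intro u
      by_contra hc
      exact hno ⟨u, hc⟩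
    rcases Classical.em (∃ v : V,
        ¬ (∀ u ∈ inSet E v, ∀ u' ∈ inSet E v, outSet E u = outSet E u' → u = u')) with ⟨v, hv⟩ | hno2
    · rcases N.dich_at_in v (outSet E) (fun a ha x => aut_out ha x) with h | h
      · exact univOp_univ1 (N.univOp_prop h)
      · exact absurd h hv
    · have t2 : ∀ v : V, ∀ u ∈ inSet E v, ∀ u' ∈ inSet E v, outSet E u = outSet E u' → u = u' := by
        intro v
        by_contra hc
        exact hno2 ⟨v, hc⟩
      exact (N.caseB_false t1 t2).elim

lemma Nice.trivOO_all (N : Nice E φ p m) (hnc : ¬ IsComplete E φ) :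
    ∀ u : V, ∀ v ∈ outSet E u, ∀ v' ∈ outSet E u, outSet E v = outSet E v' → v = v' := by
  rcases Classical.em (∃ u : V,
      ¬ (∀ v ∈ outSet E u, ∀ v' ∈ outSet E u, outSet E v = outSet E v' → v = v')) with ⟨u, hu⟩ | hno
  · rcases N.dich_at_out u (outSet E) (fun a ha x => aut_out ha x) with h | h
    · have hOO : UnivOO E := N.univOO_prop h
      exact absurd (N.complete_of_m_le_p (N.m_le_p_of_univOO hOO)) hnc
    · exact absurd h hu
  · intro u
    by_contra hc
    exact hno ⟨u, hc⟩

lemma Nice.complete_skew (N : Nice E φ p m) (hC : IsComplete E φ) :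
    ∃ e : V ≃ V, ∀ u v : V, E u v ↔ E (e v) (e u) := by
  classical
  have hη : ∀ i : ℤ, Nonempty (↥(φ ⁻¹' {i}) ≃ Fin m) := by
    intro i
    haveI := (N.fib_finite i).fintype
    have hc : Fintype.card ↥(φ ⁻¹' {i}) = m := by
      rw [← Set.toFinset_card, ← Set.ncard_eq_toFinset_card']
      exact N.fib i
    exact ⟨Fintype.equivFinOfCardEq hc⟩
  set η : ∀ i : ℤ, ↥(φ ⁻¹' {i}) ≃ Fin m := fun i => (hη i).some with hηdef
  set ξ : V → ℤ × Fin m := fun x => (φ x, η (φ x) ⟨x, rfl⟩) with hξ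
  set ζ : ℤ × Fin m → V := fun q => ((η q.1).symm q.2 : V) with hζ
  have hζφ : ∀ q, φ (ζ q) = q.1 := fun q => ((η q.1).symm q.2).2
  have hlr : ∀ x, ζ (ξ x) = x := by
    intro x
    show ((η (φ x)).symm (η (φ x) ⟨x, rfl⟩) : V) = x
    rw [Equiv.symm_apply_apply]
  have key : ∀ (i : ℤ) (x : V) (hx : φ x = i), ξ x = (i, η i ⟨x, hx⟩) := by
    intro i x hx
    subst hx
    rfl
  have hrl : ∀ q, ξ (ζ q) = q := by
    rintro ⟨i, a⟩
    have hx : φ (ζ (i, a)) = i := hζφ (i, a)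
    rw [key i (ζ (i, a)) hx]
    have h2 : (⟨ζ (i, a), hx⟩ : ↥(φ ⁻¹' {i})) = (η i).symm a := Subtype.ext rfl
    rw [h2, Equiv.apply_symm_apply]
  set e : V → V := fun x => ζ (-(ξ x).1, (ξ x).2) with he
  have heφ : ∀ x, φ (e x) = -(φ x) := by
    intro x
    rw [he]
    exact hζφ _
  have hee : ∀ x, e (e x) = x := by
    intro x
    show ζ (-(ξ (ζ (-(ξ x).1, (ξ x).2))).1, (ξ (ζ (-(ξ x).1, (ξ x).2))).2) = x
    rw [hrl]
    show ζ (-(-(ξ x).1), (ξ x).2) = x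
    rw [neg_neg]
    exact hlr x
  refine ⟨⟨e, e, hee, hee⟩, ?_⟩
  intro u v
  have hcoe : ∀ x, (⟨e, e, hee, hee⟩ : V ≃ V) x = e x := fun x => rfl
  simp only [hcoe]
  constructor
  · intro huv
    apply hC
    have h1 := N.hom u v huv
    rw [heφ, heφ]
    omega
  · intro huv
    apply hC
    have h1 := N.hom (e v) (e u) huv
    rw [heφ, heφ] at h1
    omega

end TEP
namespace TEP

open Set

variable {V : Type*}

/-- Setoid identifying vertices with the same out-neighbourhood. -/
def osetoid (E : V → V → Prop) : Setoid V :=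
  ⟨fun a b => outSet E a = outSet E b, ⟨fun _ => rfl, Eq.symm, Eq.trans⟩⟩

def qmk (E : V → V → Prop) (x : V) : Quotient (osetoid E) := Quotient.mk (osetoid E) x

lemma qmk_eq {E : V → V → Prop} {x y : V} :
    qmk E x = qmk E y ↔ outSet E x = outSet E y := by
  constructor
  · intro h
    exact Quotient.exact h
  · intro h
    exact Quotient.sound h

lemma qmk_out (E : V → V → Prop) (A : Quotient (osetoid E)) : qmk E (Quotient.out A) = A :=
  Quotient.out_eq A

lemma qmk_surj (E : V → V → Prop) (A : Quotient (osetoid E)) : ∃ x, qmk E x = A :=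
  ⟨Quotient.out A, qmk_out E A⟩

/-- The quotient digraph. -/
def QE (E : V → V → Prop) : Quotient (osetoid E) → Quotient (osetoid E) → Prop :=
  fun A B => ∃ x y, E x y ∧ qmk E x = A ∧ qmk E y = B

/-- The induced level function on the quotient. -/
noncomputable def qphi (E : V → V → Prop) (φ : V → ℤ) : Quotient (osetoid E) → ℤ :=
  fun A => φ (Quotient.out A)

variable {E : V → V → Prop} {φ : V → ℤ} {p m : ℕ}

lemma Nice.phi_eq_of_outeq (N : Nice E φ p m) {x y : V} (h : outSet E x = outSet E y) :
    φ x = φ y := by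
  obtain ⟨v, hv⟩ := N.out_nonempty x
  have hv' : v ∈ outSet E y := by rw [← h]; exact hv
  have h1 := N.hom x v hv
  have h2 := N.hom y v hv'
  omega

lemma Nice.qphi_mk (N : Nice E φ p m) (x : V) : qphi E φ (qmk E x) = φ x := by
  have h := qmk_out E (qmk E x)
  exact N.phi_eq_of_outeq (qmk_eq.1 h)

lemma Nice.qstep (N : Nice E φ p m) {x : V} {B : Quotient (osetoid E)}
    (h : QE E (qmk E x) B) : ∃ y, E x y ∧ qmk E y = B := by
  obtain ⟨x₀, y₀, hxy, hx, hy⟩ := h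
  have hout : outSet E x₀ = outSet E x := qmk_eq.1 hx
  refine ⟨y₀, ?_, hy⟩
  have : y₀ ∈ outSet E x₀ := hxy
  rwa [hout] at this

lemma Nice.qhom (N : Nice E φ p m) {A B : Quotient (osetoid E)} (h : QE E A B) :
    qphi E φ B = qphi E φ A + 1 := by
  obtain ⟨x, y, hxy, hx, hy⟩ := h
  rw [← hx, ← hy, N.qphi_mk, N.qphi_mk]
  exact N.hom x y hxy

lemma Nice.qconn (N : Nice E φ p m) : DConnected (QE E) := by
  intro A B
  have h := N.conn (Quotient.out A) (Quotient.out B)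
  have h2 : Relation.ReflTransGen (fun X Y => QE E X Y ∨ QE E Y X)
      (qmk E (Quotient.out A)) (qmk E (Quotient.out B)) := by
    refine Relation.ReflTransGen.lift (qmk E) ?_ _ _ h
    intro a b hab
    rcases hab with h3 | h3
    · exact Or.inl ⟨a, b, h3, rfl, rfl⟩
    · exact Or.inr ⟨b, a, h3, rfl, rfl⟩
  rw [qmk_out, qmk_out] at h2
  exact h2

lemma Nice.qout_eq (N : Nice E φ p m) (x : V) :
    outSet (QE E) (qmk E x) = qmk E '' outSet E x := by
  ext B
  constructor
  · intro hB
    obtain ⟨y, hy, hyB⟩ := N.qstep hB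
    exact ⟨y, hy, hyB⟩
  · rintro ⟨y, hy, rfl⟩
    exact ⟨x, y, hy, rfl, rfl⟩

lemma Nice.qout_card (N : Nice E φ p m)
    (hT : ∀ u : V, ∀ v ∈ outSet E u, ∀ v' ∈ outSet E u, outSet E v = outSet E v' → v = v')
    (x : V) : (outSet (QE E) (qmk E x)).ncard = p := by
  rw [N.qout_eq x]
  rw [Set.ncard_image_of_injOn (fun a ha b hb hab => hT x a ha b hb (qmk_eq.1 hab))]
  exact N.hout x

lemma Nice.qfib_eq (N : Nice E φ p m) (i : ℤ) :
    qphi E φ ⁻¹' {i} = qmk E '' (φ ⁻¹' {i}) := by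
  ext A
  constructor
  · intro hA
    have h : qphi E φ A = i := hA
    refine ⟨Quotient.out A, ?_, qmk_out E A⟩
    show φ (Quotient.out A) = i
    exact h
  · rintro ⟨x, hx, rfl⟩
    show qphi E φ (qmk E x) = i
    rw [N.qphi_mk]
    exact hx

lemma Nice.qfib_card (N : Nice E φ p m) (hU : Univ1 E) (i : ℤ) :
    (qphi E φ ⁻¹' {i}).ncard * p = m := by
  classical
  have hOp : UnivOp E := univ1_univOp hU
  set s : Finset V := (N.fib_finite i).toFinset with hs
  have hsmem : ∀ x, x ∈ s ↔ φ x = i := by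
    intro x; simp [hs, Set.Finite.mem_toFinset]
  have hscard : s.card = m := by
    rw [hs, ← Set.ncard_eq_toFinset_card _ (N.fib_finite i)]; exact N.fib i
  have hcount : s.card = (s.image (qmk E)).card * p := by
    rw [Finset.card_eq_sum_card_fiberwise (f := qmk E) (t := s.image (qmk E))
      (fun x hx => Finset.mem_image_of_mem _ hx)]
    have hterm : ∀ A ∈ s.image (qmk E), (s.filter (fun b => qmk E b = A)).card = p := by
      intro A hA
      obtain ⟨x, hx, rfl⟩ := Finset.mem_image.1 hA
      obtain ⟨v, hv⟩ := N.out_nonempty x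
      have hfe : s.filter (fun b => qmk E b = qmk E x) = (N.in_finite v).toFinset := by
        ext u'
        simp only [Finset.mem_filter, Set.Finite.mem_toFinset, hsmem, qmk_eq]
        constructor
        · rintro ⟨hu1, hu2⟩
          show E u' v
          have : v ∈ outSet E u' := by rw [hu2]; exact hv
          exact this
        · intro hu'
          have hx' : E x v := hv
          have houteq : outSet E u' = outSet E x := hOp v u' hu' x hx'
          refine ⟨?_, houteq⟩
          have h1 := N.hom u' v hu'
          have h2 := N.hom x v hv
          have h3 := (hsmem x).1 hx
          omega
      rw [hfe, ← Set.ncard_eq_toFinset_card _ (N.in_finite v)]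
      exact N.indeg_eq v
    rw [Finset.sum_congr rfl hterm, Finset.sum_const, smul_eq_mul]
  have himg : qphi E φ ⁻¹' {i} = ↑(s.image (qmk E)) := by
    rw [N.qfib_eq i]
    ext A
    simp only [Finset.coe_image, Set.mem_image, Finset.mem_coe]
    constructor
    · rintro ⟨x, hx, rfl⟩
      exact ⟨x, (hsmem x).2 hx, rfl⟩
    · rintro ⟨x, hx, rfl⟩
      refine ⟨x, ?_, rfl⟩
      exact (hsmem x).1 hx
  rw [himg, Set.ncard_coe_finset, ← hcount, hscard]

end TEP
namespace TEP

open Set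

variable {V : Type*}

noncomputable def pick (E : V → V → Prop) (x : V) (B : Quotient (osetoid E)) : V :=
  @Classical.epsilon V ⟨x⟩ (fun y => E x y ∧ qmk E y = B)

lemma pick_spec {E : V → V → Prop} {x : V} {B : Quotient (osetoid E)}
    (h : ∃ y, E x y ∧ qmk E y = B) : E x (pick E x B) ∧ qmk E (pick E x B) = B :=
  Classical.epsilon_spec_aux ⟨x⟩ (fun y => E x y ∧ qmk E y = B) h

variable {E : V → V → Prop} {φ : V → ℤ} {p m : ℕ}

lemma Nice.qlift (N : Nice E φ p m) {k : ℕ} (f' : Fin (k+1) → Quotient (osetoid E))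
    (hf' : IsKArc (QE E) k f') :
    ∃ f : Fin (k+1) → V, IsKArc E k f ∧ ∀ i, qmk E (f i) = f' i := by
  classical
  obtain ⟨x₀, hx₀⟩ := qmk_surj E (f' 0)
  set F' : ℕ → Quotient (osetoid E) := fun n => f' ⟨min n k, by omega⟩ with hF'
  set g : ℕ → V := fun n => Nat.rec x₀ (fun n xn => pick E xn (F' (n+1))) n with hg
  have hg0 : g 0 = x₀ := rfl
  have hgs : ∀ n, g (n+1) = pick E (g n) (F' (n+1)) := fun n => rfl
  have hF'eq : ∀ (n : ℕ) (hn : n ≤ k), F' n = f' ⟨n, by omega⟩ := by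
    intro n hn
    show f' _ = f' _
    congr 1
    exact Fin.ext (by simp [Nat.min_eq_left hn])
  have harc' : ∀ n, n < k → QE E (F' n) (F' (n+1)) := by
    intro n hn
    have h1 := hf' ⟨n, hn⟩
    have e1 : F' n = f' (Fin.castSucc ⟨n, hn⟩) := by
      rw [hF'eq n hn.le]
      congr 1
    have e2 : F' (n+1) = f' (Fin.succ ⟨n, hn⟩) := by
      rw [hF'eq (n+1) hn]
      congr 1
    rw [e1, e2]
    exact h1
  have hinv : ∀ n, n ≤ k → qmk E (g n) = F' n ∧ (1 ≤ n → E (g (n-1)) (g n)) := by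
    intro n
    induction n with
    | zero =>
      intro _
      constructor
      · rw [hg0, hx₀, hF'eq 0 (by omega)]
        congr 1
      · intro h; omega
    | succ n ih =>
      intro hn1
      have hn : n ≤ k := by omega
      obtain ⟨hq, -⟩ := ih hn
      have hQE : QE E (qmk E (g n)) (F' (n+1)) := by
        rw [hq]
        exact harc' n (by omega)
      have hex : ∃ y, E (g n) y ∧ qmk E y = F' (n+1) := N.qstep hQE
      have hp := pick_spec hex
      rw [hgs n]
      refine ⟨hp.2, fun _ => ?_⟩
      simpa using hp.1
  refine ⟨fun i => g i, ?_, ?_⟩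
  · intro i
    have h2 := (hinv (i.1 + 1) i.2).2 (by omega)
    simp only [Fin.coe_castSucc, Fin.val_succ]
    simpa using h2
  · intro i
    have h2 := (hinv i.1 (by omega)).1
    rw [h2, hF'eq i.1 (by omega)]

lemma Nice.qaut (N : Nice E φ p m) {a : Equiv.Perm V} (ha : a ∈ autGroup E) :
    ∃ b : Equiv.Perm (Quotient (osetoid E)), b ∈ autGroup (QE E) ∧
      ∀ x, b (qmk E x) = qmk E (a x) := by
  have hrespa : ∀ x y : V, outSet E x = outSet E y → qmk E (a x) = qmk E (a y) := by
    intro x y h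
    rw [qmk_eq, aut_out ha, aut_out ha, h]
  have hresps : ∀ x y : V, outSet E x = outSet E y → qmk E (a.symm x) = qmk E (a.symm y) := by
    intro x y h
    have ha' : a⁻¹ ∈ autGroup E := (autGroup E).inv_mem ha
    have hc : ∀ z, (a⁻¹ : Equiv.Perm V) z = a.symm z := fun z => rfl
    rw [qmk_eq, ← hc, ← hc, aut_out ha', aut_out ha', h]
  set bf : Quotient (osetoid E) → Quotient (osetoid E) :=
    Quotient.lift (fun x => qmk E (a x)) (fun x y h => hrespa x y h) with hbf
  set bs : Quotient (osetoid E) → Quotient (osetoid E) :=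
    Quotient.lift (fun x => qmk E (a.symm x)) (fun x y h => hresps x y h) with hbs
  have hbfmk : ∀ x, bf (qmk E x) = qmk E (a x) := fun x => rfl
  have hbsmk : ∀ x, bs (qmk E x) = qmk E (a.symm x) := fun x => rfl
  have hleft : ∀ A, bs (bf A) = A := by
    intro A
    obtain ⟨x, rfl⟩ := qmk_surj E A
    simp only [hbfmk, hbsmk, Equiv.symm_apply_apply]
  have hright : ∀ A, bf (bs A) = A := by
    intro A
    obtain ⟨x, rfl⟩ := qmk_surj E A
    simp only [hbsmk, hbfmk, Equiv.apply_symm_apply]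
  set b : Equiv.Perm (Quotient (osetoid E)) := ⟨bf, bs, hleft, hright⟩ with hb
  have hbmk : ∀ x, b (qmk E x) = qmk E (a x) := fun x => rfl
  refine ⟨b, ?_, hbmk⟩
  intro A B
  constructor
  · rintro ⟨x, y, hxy, rfl, rfl⟩
    exact ⟨a x, a y, (mem_aut_iff.1 ha x y).1 hxy, (hbmk x).symm, (hbmk y).symm⟩
  · intro h
    rw [← qmk_out E A, ← qmk_out E B] at h ⊢
    set x := Quotient.out A
    set y := Quotient.out B
    rw [hbmk, hbmk] at h
    obtain ⟨x', y', hxy', hx', hy'⟩ := h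
    have hox : outSet E x' = outSet E (a x) := qmk_eq.1 hx'
    have hoy : outSet E y' = outSet E (a y) := qmk_eq.1 hy'
    have h1 : E (a x) y' := by
      have : y' ∈ outSet E x' := hxy'
      rwa [hox] at this
    have h2 : E x (a.symm y') := by
      have h3 := (mem_aut_iff.1 ha x (a.symm y')).2
      apply h3
      rwa [Equiv.apply_symm_apply]
    refine ⟨x, a.symm y', h2, rfl, ?_⟩
    rw [qmk_eq]
    have ha' : a⁻¹ ∈ autGroup E := (autGroup E).inv_mem ha
    have hc : ∀ z, (a⁻¹ : Equiv.Perm V) z = a.symm z := fun z => rfl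
    rw [← hc, aut_out ha', hoy, ← aut_out ha', hc, Equiv.symm_apply_apply]

lemma Nice.qNice (N : Nice E φ p m) (hU : Univ1 E)
    (hT : ∀ u : V, ∀ v ∈ outSet E u, ∀ v' ∈ outSet E u, outSet E v = outSet E v' → v = v') :
    Nice (QE E) (qphi E φ) p (m / p) := by
  have hdiv : ∀ i : ℤ, (qphi E φ ⁻¹' {i}).ncard = m / p := by
    intro i
    have h := N.qfib_card hU i
    have hp0 : 0 < p := N.pp.pos
    exact (Nat.div_eq_of_eq_mul_left hp0 h.symm).symm
  refine ⟨N.qconn, ?_, ?_, fun A B h => N.qhom h, hdiv, N.pp, ?_⟩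
  · -- highly arc transitive
    intro k f' g' hf' hg'
    obtain ⟨f, hf, hfm⟩ := N.qlift f' hf'
    obtain ⟨g, hg, hgm⟩ := N.qlift g' hg'
    obtain ⟨a, ha, hai⟩ := N.hat k f g hf hg
    obtain ⟨b, hb, hbm⟩ := N.qaut ha
    refine ⟨b, hb, ?_⟩
    intro i
    rw [← hfm i, hbm, hai, hgm]
  · -- out-valency
    intro A
    rw [← qmk_out E A]
    exact N.qout_card hT (Quotient.out A)
  · -- fibre size positive
    have h := N.qfib_card hU 0
    have hm := N.m1
    have h2 := hdiv 0
    have hnz : (qphi E φ ⁻¹' {(0:ℤ)}).ncard ≠ 0 := by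
      intro h0
      rw [h0, zero_mul] at h
      omega
    omega

end TEP
namespace TEP

open Set

universe u

variable {V : Type*} {E : V → V → Prop} {φ : V → ℤ} {p m : ℕ}

lemma Nice.skew_lift (N : Nice E φ p m) (hU : Univ1 E)
    (hT : ∀ u : V, ∀ v ∈ outSet E u, ∀ v' ∈ outSet E u, outSet E v = outSet E v' → v = v')
    (e' : Quotient (osetoid E) ≃ Quotient (osetoid E))
    (he' : ∀ A B, QE E A B ↔ QE E (e' B) (e' A)) :
    ∃ e : V ≃ V, ∀ u v : V, E u v ↔ E (e v) (e u) := by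
  classical
  have hOp : UnivOp E := univ1_univOp hU
  have hwex : ∀ u : V, ∃ x, E x u := fun u => N.in_nonempty u
  choose w hwE using hwex
  set T := {q : Quotient (osetoid E) × Quotient (osetoid E) // QE E q.1 q.2} with hTdef
  set Θ : V → T := fun u => ⟨(qmk E (w u), qmk E u), ⟨w u, u, hwE u, rfl, rfl⟩⟩ with hΘdef
  have hwcls : ∀ u x : V, E x u → qmk E x = qmk E (w u) := by
    intro u x hx
    rw [qmk_eq]
    exact hOp u x hx (w u) (hwE u)
  have hchar : ∀ u v : V, E u v ↔ qmk E u = (Θ v).1.1 := by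
    intro u v
    constructor
    · intro h
      exact hwcls v u h
    · intro h
      have h2 : outSet E u = outSet E (w v) := qmk_eq.1 h
      have hv : v ∈ outSet E (w v) := hwE v
      rw [← h2] at hv
      exact hv
  have hΘinj : Function.Injective Θ := by
    intro u u' h
    have h1 : qmk E u = qmk E u' := congrArg (fun t : T => t.1.2) h
    have h2 : qmk E (w u) = qmk E (w u') := congrArg (fun t : T => t.1.1) h
    have houtw : outSet E (w u) = outSet E (w u') := qmk_eq.1 h2
    have hu'mem : u' ∈ outSet E (w u) := by rw [houtw]; exact hwE u'
    exact hT (w u) u (hwE u) u' hu'mem (qmk_eq.1 h1)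
  have hΘsurj : Function.Surjective Θ := by
    rintro ⟨⟨A, B⟩, hAB⟩
    obtain ⟨x, y, hxy, hx, hy⟩ := hAB
    refine ⟨y, Subtype.ext ?_⟩
    show (qmk E (w y), qmk E y) = (A, B)
    have hx' : qmk E x = A := hx
    have hy' : qmk E y = B := hy
    rw [← hx', ← hy', hwcls y x hxy]
  have hsk : ∀ q : T, QE E (e' q.1.2) (e' q.1.1) := fun q => (he' q.1.1 q.1.2).1 q.2
  have hsk' : ∀ q : T, QE E (e'.symm q.1.2) (e'.symm q.1.1) := by
    intro q
    apply (he' (e'.symm q.1.2) (e'.symm q.1.1)).2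
    rw [Equiv.apply_symm_apply, Equiv.apply_symm_apply]
    exact q.2
  set σf : T → T := fun q => ⟨(e' q.1.2, e' q.1.1), hsk q⟩ with hσf
  set σs : T → T := fun q => ⟨(e'.symm q.1.2, e'.symm q.1.1), hsk' q⟩ with hσs
  have hσl : ∀ q, σs (σf q) = q := by
    intro q
    apply Subtype.ext
    show (e'.symm (e' q.1.1), e'.symm (e' q.1.2)) = q.1
    rw [Equiv.symm_apply_apply, Equiv.symm_apply_apply]
  have hσr : ∀ q, σf (σs q) = q := by
    intro q
    apply Subtype.ext
    show (e' (e'.symm q.1.1), e' (e'.symm q.1.2)) = q.1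
    rw [Equiv.apply_symm_apply, Equiv.apply_symm_apply]
  set ΘE : V ≃ T := Equiv.ofBijective Θ ⟨hΘinj, hΘsurj⟩ with hΘE
  set σE : T ≃ T := ⟨σf, σs, hσl, hσr⟩ with hσE
  set e : V ≃ V := ΘE.trans (σE.trans ΘE.symm) with he
  have hΘcoe : ∀ x, ΘE x = Θ x := fun x => rfl
  have hΘe : ∀ x, Θ (e x) = σf (Θ x) := by
    intro x
    have h1 : e x = ΘE.symm (σE (ΘE x)) := rfl
    have h2 : ΘE (e x) = σE (ΘE x) := by rw [h1, Equiv.apply_symm_apply]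
    rw [← hΘcoe, h2]
    rfl
  refine ⟨e, ?_⟩
  intro u v
  have e1 : qmk E (e v) = e' ((Θ v).1.1) := by
    have h3 : qmk E (e v) = (Θ (e v)).1.2 := rfl
    rw [h3, hΘe v]
  have e2 : (Θ (e u)).1.1 = e' (qmk E u) := by
    rw [hΘe u]
  constructor
  · intro h
    apply (hchar (e v) (e u)).2
    rw [e1, e2, (hchar u v).1 h]
  · intro h
    have h2 := (hchar (e v) (e u)).1 h
    rw [e1, e2] at h2
    exact (hchar u v).2 (e'.injective h2).symm

theorem main : ∀ (p m : ℕ) {V : Type u} (E : V → V → Prop) (φ : V → ℤ),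
    Nice E φ p m → ∃ e : V ≃ V, ∀ u v : V, E u v ↔ E (e v) (e u) := by
  intro p m
  induction m using Nat.strong_induction_on with
  | _ m IH =>
    intro V E φ N
    by_cases hC : IsComplete E φ
    · exact N.complete_skew hC
    · have hU : Univ1 E := N.univ1_all
      have hT := N.trivOO_all hC
      have hQ : Nice (QE E) (qphi E φ) p (m / p) := N.qNice hU hT
      have hlt : m / p < m := Nat.div_lt_self (by have := N.m1; omega) N.pp.one_lt
      obtain ⟨e', he'⟩ := IH (m / p) hlt (QE E) (qphi E φ) hQ
      exact N.skew_lift hU hT e' he'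

end TEP
/-- A connected two-ended highly-arc-transitive digraph of prime
out-valency with fibre size `m > 2` is skew-symmetric: it is isomorphic to its reverse
digraph. -/
theorem two_ended_prime_valency_skew_symmetric
    {V : Type*} (E : V → V → Prop)
    (hconn : DConnected E) (h2 : TwoEnded E) (hhat : HighlyArcTransitive E)
    (p : ℕ) (hp : p.Prime) (hout : ∀ v : V, (outSet E v).ncard = p)
    (φ : V → ℤ) (hsurj : Function.Surjective φ)
    (hhom : ∀ u v : V, E u v → φ v = φ u + 1)
    (m : ℕ) (hm : 2 < m) (hfib : ∀ i : ℤ, (φ ⁻¹' {i}).ncard = m) :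
    ∃ e : V ≃ V, ∀ u v : V, E u v ↔ E (e v) (e u) := by
  have N : TEP.Nice E φ p m := ⟨hconn, hhat, hout, hhom, hfib, hp, by omega⟩
  exact TEP.main p m E φ N
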